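/- For a spider web quiver Q with middle-circle x-variables x_1,…,x_n and with x_0 := x_n, the mutation sequence μ_{n−2}⋯μ_2 μ_1 applied to the initial seed gives, for each 1 ≤ i ≤ n−2, μ_{n−2}⋯μ_1(x_i) = [Σ_{j=0}^{i} x_{[j]⁻} x_{[j]⁺} (∏_{k=0}^{j−1} x_k)(∏_{k=j+1}^{i} x_{k+1} x_{k,A} x_{k,B})] / ∏_{k=1}^{i} x_k, where x_{k,A} := x_α if k is the smallest element of A and 1 otherwise, and x_{k,B} := x_β if k is the smallest element of B and 1 otherwise. -/

import Mathlib

noncomputable section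

/-! ### Cluster mutation machinery -/

section Mutation

variable {V : Type*} [DecidableEq V] [Fintype V]

/-- Quiver mutation at a vertex `k`, acting on the skew-symmetric adjacency matrix `B`
(where `B i j` is the number of arrows `i → j` minus the number of arrows `j → i`;
a quiver with no loops and no directed 2-cycles is determined by this matrix). -/
def mutB (B : V → V → ℤ) (k : V) : V → V → ℤ := fun i j =>
  if i = k ∨ j = k then -B i j
  else B i j + max (B i k) 0 * max (B k j) 0 - max (-B i k) 0 * max (-B k j) 0

/-- Cluster `x`-variable mutation at a vertex `k`:
`x_k ↦ (∏_{arrows k → j} x_j + ∏_{arrows j → k} x_j) / x_k`, other variables fixed. -/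
def mutX (B : V → V → ℤ) (k : V) (x : V → ℝ) : V → ℝ := fun i =>
  if i = k then ((∏ j, x j ^ (B k j).toNat) + ∏ j, x j ^ (B j k).toNat) / x k else x i

/-- `y`-variable mutation at a vertex `k`: `y_k ↦ y_k⁻¹`, and for `i ≠ k` the variable `y_i`
is multiplied by `(1+y_k⁻¹)^{-e}` if there are `e > 0` arrows `k → i` and by `(1+y_k)^{e}`
if there are `e > 0` arrows `i → k`. -/
def mutY (B : V → V → ℤ) (k : V) (y : V → ℝ) : V → ℝ := fun i =>
  if i = k then (y k)⁻¹
  else y i * (1 + y k) ^ (B i k).toNat / (1 + (y k)⁻¹) ^ (B k i).toNat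

/-- One seed mutation step for `x`-seeds (quiver together with `x`-variables). -/
def stepX (s : (V → V → ℤ) × (V → ℝ)) (k : V) : (V → V → ℤ) × (V → ℝ) :=
  (mutB s.1 k, mutX s.1 k s.2)

/-- One seed mutation step for `y`-seeds (quiver together with `y`-variables). -/
def stepY (s : (V → V → ℤ) × (V → ℝ)) (k : V) : (V → V → ℤ) × (V → ℝ) :=
  (mutB s.1 k, mutY s.1 k s.2)

/-- Relabelling a quiver by a permutation of the vertices. -/
def relabelB (σ : Equiv.Perm V) (B : V → V → ℤ) : V → V → ℤ := fun i j => B (σ i) (σ j)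

/-- Relabelling a seed by a permutation of the vertices. -/
def relabelSeed (σ : Equiv.Perm V) (s : (V → V → ℤ) × (V → ℝ)) :
    (V → V → ℤ) × (V → ℝ) :=
  (relabelB σ s.1, fun i => s.2 (σ i))

end Mutation

/-! ### Spider web quivers with three circles

The vertex set consists of a middle circle with `n` vertices, an outer circle with `m`
vertices and an inner circle with `l` vertices; the vertex of the middle circle with
(1-based) label `i` is `Sum.inl (i-1 : ZMod n)`, and similarly for the other two circles,
so that the counterclockwise circle arrows are `v → v + 1`.  The arrows between adjacent
circles form alternating zig-zag cycles
`⋯ → oA t → aA t → oA (t-1) → aA (t-1) → ⋯` (outer/middle, where `aA` lists the middle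
vertices attached to the outer circle and `oA` the outer vertices attached to the middle
circle, both in increasing label order) and similarly `aB`, `oB` for inner/middle. -/

/-- Vertex set of a three-circle spider web quiver. -/
abbrev SWV (n m l : ℕ) := ZMod n ⊕ ZMod m ⊕ ZMod l

/-- The middle-circle vertex with 1-based label `i` (read cyclically, so label `n` = label `0`). -/
def midV (n m l : ℕ) [NeZero n] (i : ℕ) : SWV n m l :=
  Sum.inl (((i + (n - 1) : ℕ) : ZMod n))

/-- The outer-circle vertex with 1-based label `i` (read cyclically). -/
def outV (n m l : ℕ) [NeZero m] (i : ℕ) : SWV n m l :=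
  Sum.inr (Sum.inl (((i + (m - 1) : ℕ) : ZMod m)))

/-- The inner-circle vertex with 1-based label `i` (read cyclically). -/
def innV (n m l : ℕ) [NeZero l] (i : ℕ) : SWV n m l :=
  Sum.inr (Sum.inr (((i + (l - 1) : ℕ) : ZMod l)))

/-- The number of arrows `u → v` in the spider web quiver with attachment data
`aA, oA, aB, oB`. -/
def swArr (n m l fA fB : ℕ) [NeZero n] [NeZero m] [NeZero l] [NeZero fA] [NeZero fB]
    (aA : Fin fA → ZMod n) (oA : Fin fA → ZMod m)
    (aB : Fin fB → ZMod n) (oB : Fin fB → ZMod l) (u v : SWV n m l) : ℕ :=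
  (if ∃ i : ZMod n, u = Sum.inl i ∧ v = Sum.inl (i + 1) then 1 else 0) +
  (if ∃ j : ZMod m, u = Sum.inr (Sum.inl j) ∧ v = Sum.inr (Sum.inl (j + 1)) then 1 else 0) +
  (if ∃ k : ZMod l, u = Sum.inr (Sum.inr k) ∧ v = Sum.inr (Sum.inr (k + 1)) then 1 else 0) +
  (if ∃ t : Fin fA, u = Sum.inr (Sum.inl (oA t)) ∧ v = Sum.inl (aA t) then 1 else 0) +
  (if ∃ t : Fin fA, u = Sum.inl (aA t) ∧ v = Sum.inr (Sum.inl (oA (t - 1))) then 1 else 0) +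
  (if ∃ t : Fin fB, u = Sum.inr (Sum.inr (oB t)) ∧ v = Sum.inl (aB t) then 1 else 0) +
  (if ∃ t : Fin fB, u = Sum.inl (aB t) ∧ v = Sum.inr (Sum.inr (oB (t - 1))) then 1 else 0)

/-- The (skew-symmetric) adjacency matrix of the spider web quiver. -/
def swB (n m l fA fB : ℕ) [NeZero n] [NeZero m] [NeZero l] [NeZero fA] [NeZero fB]
    (aA : Fin fA → ZMod n) (oA : Fin fA → ZMod m)
    (aB : Fin fB → ZMod n) (oB : Fin fB → ZMod l) (u v : SWV n m l) : ℤ :=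
  (swArr n m l fA fB aA oA aB oB u v : ℤ) - swArr n m l fA fB aA oA aB oB v u

/-- The combinatorial conditions making the attachment data a genuine (three-circle)
spider web quiver: every circle carries at least the required number of vertices, there are
at least two attachments between adjacent circles (each face between circles is an oriented
cycle with exactly two between-circle arrows and at least 3 sides), the attachment maps are
strictly increasing for the label order on each circle, and the labelling convention of the
paper holds: the outer (resp. inner) vertex `1⁻` (resp. `1⁺`) is the one whose arrow points
at the smallest middle vertex connected to the outer (resp. inner) circle. -/
structure IsSpiderWeb (n m l fA fB : ℕ) [NeZero n] [NeZero m] [NeZero l] [NeZero fA]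
    [NeZero fB] (aA : Fin fA → ZMod n) (oA : Fin fA → ZMod m)
    (aB : Fin fB → ZMod n) (oB : Fin fB → ZMod l) : Prop where
  hn : 3 ≤ n
  hm : 2 ≤ m
  hl : 2 ≤ l
  hfA : 2 ≤ fA
  hfB : 2 ≤ fB
  monoAA : StrictMono fun t => (aA t).val
  monoOA : StrictMono fun t => (oA t).val
  monoAB : StrictMono fun t => (aB t).val
  monoOB : StrictMono fun t => (oB t).val
  convA : oA 0 = 0
  convB : oB 0 = 0

/-- The middle-circle vertices `1, 2, …, n` in order (the mutation sequence `μ_n ⋯ μ_2 μ_1`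
applied on the left of a seed corresponds to folding over this list). -/
def upList (n m l : ℕ) [NeZero n] : List (SWV n m l) :=
  (List.range n).map fun i => (Sum.inl ((i : ZMod n)) : SWV n m l)

/-- The middle-circle vertices `n-2, …, 2, 1` in order. -/
def downList (n m l : ℕ) [NeZero n] : List (SWV n m l) :=
  ((List.range (n - 2)).reverse).map fun i => (Sum.inl ((i : ZMod n)) : SWV n m l)

/-- The transposition `s_{n-1,n}` of the middle-circle vertices `n-1` and `n`. -/
def swapPerm (n m l : ℕ) [NeZero n] [NeZero m] [NeZero l] : Equiv.Perm (SWV n m l) :=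
  Equiv.swap (Sum.inl (((n - 2 : ℕ) : ZMod n))) (Sum.inl (((n - 1 : ℕ) : ZMod n)))

/-- `τ = μ₁ μ₂ ⋯ μ_{n-2} ∘ s_{n-1,n} ∘ μ_n μ_{n-1} ⋯ μ₁` acting on quivers. -/
def tauB (n m l : ℕ) [NeZero n] [NeZero m] [NeZero l]
    (B : SWV n m l → SWV n m l → ℤ) : SWV n m l → SWV n m l → ℤ :=
  (downList n m l).foldl mutB (relabelB (swapPerm n m l) ((upList n m l).foldl mutB B))

/-- `τ` acting on `x`-seeds. -/
def tauX (n m l : ℕ) [NeZero n] [NeZero m] [NeZero l]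
    (s : (SWV n m l → SWV n m l → ℤ) × (SWV n m l → ℝ)) :
    (SWV n m l → SWV n m l → ℤ) × (SWV n m l → ℝ) :=
  (downList n m l).foldl stepX (relabelSeed (swapPerm n m l) ((upList n m l).foldl stepX s))

/-- `τ` acting on `y`-seeds. -/
def tauY (n m l : ℕ) [NeZero n] [NeZero m] [NeZero l]
    (s : (SWV n m l → SWV n m l → ℤ) × (SWV n m l → ℝ)) :
    (SWV n m l → SWV n m l → ℤ) × (SWV n m l → ℝ) :=
  (downList n m l).foldl stepY (relabelSeed (swapPerm n m l) ((upList n m l).foldl stepY s))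

/-- `x_k` for the middle circle, `1 ≤ k ≤ n`, with the convention `x_0 := x_n`
(read cyclically). -/
def xm (n m l : ℕ) [NeZero n] (x : SWV n m l → ℝ) (k : ℕ) : ℝ := x (midV n m l k)

/-- `x_{[j]⁻}`: the `x`-variable of the largest outer-circle vertex having an arrow to an
element of `{1, …, j}` of the middle circle, or `1` if there is none. -/
def xjm (n m l fA : ℕ) [NeZero n] [NeZero m] [NeZero fA]
    (aA : Fin fA → ZMod n) (oA : Fin fA → ZMod m) (x : SWV n m l → ℝ) (j : ℕ) : ℝ :=
  if hS : (Finset.univ.filter fun t : Fin fA => (aA t).val + 1 ≤ j).Nonempty then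
    x (Sum.inr (Sum.inl
      (oA ((Finset.univ.filter fun t : Fin fA => (aA t).val + 1 ≤ j).max' hS))))
  else 1

/-- `x_{[j]⁺}`: the `x`-variable of the largest inner-circle vertex having an arrow to an
element of `{1, …, j}` of the middle circle, or `1` if there is none. -/
def xjp (n m l fB : ℕ) [NeZero n] [NeZero l] [NeZero fB]
    (aB : Fin fB → ZMod n) (oB : Fin fB → ZMod l) (x : SWV n m l → ℝ) (j : ℕ) : ℝ :=
  if hS : (Finset.univ.filter fun t : Fin fB => (aB t).val + 1 ≤ j).Nonempty then
    x (Sum.inr (Sum.inr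
      (oB ((Finset.univ.filter fun t : Fin fB => (aB t).val + 1 ≤ j).max' hS))))
  else 1

/-- `x_{k,A}`: equal to `x_α` (where `α` is the largest outer vertex connected to the middle
circle) if `k` is the smallest element of `A`, and `1` otherwise. -/
def xkA (n m l fA : ℕ) [NeZero n] [NeZero m] [NeZero fA]
    (aA : Fin fA → ZMod n) (oA : Fin fA → ZMod m) (x : SWV n m l → ℝ) (k : ℕ) : ℝ :=
  if k = (aA 0).val + 1 then x (Sum.inr (Sum.inl (oA (0 - 1)))) else 1

/-- `x_{k,B}`: equal to `x_β` (where `β` is the largest inner vertex connected to the middle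
circle) if `k` is the smallest element of `B`, and `1` otherwise. -/
def xkB (n m l fB : ℕ) [NeZero n] [NeZero l] [NeZero fB]
    (aB : Fin fB → ZMod n) (oB : Fin fB → ZMod l) (x : SWV n m l → ℝ) (k : ℕ) : ℝ :=
  if k = (aB 0).val + 1 then x (Sum.inr (Sum.inr (oB (0 - 1)))) else 1

namespace SWProof

open Finset

variable {n m l fA fB : ℕ} [NeZero n] [NeZero m] [NeZero l] [NeZero fA] [NeZero fB]

lemma natCast_nsub_one_eq_neg_one (hn : 1 ≤ n) : (((n - 1 : ℕ)) : ZMod n) = -1 := by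
  have h : ((n : ℕ) : ZMod n) = 0 := ZMod.natCast_self n
  push_cast [Nat.cast_sub hn] at *
  rw [h]; ring

lemma eq_natCast_iff_val {c : ℕ} (hc : c < n) (a : ZMod n) :
    a = ((c : ℕ) : ZMod n) ↔ a.val = c := by
  constructor
  · rintro rfl; exact ZMod.val_cast_of_lt hc
  · intro h
    have : ((a.val : ℕ) : ZMod n) = ((c : ℕ) : ZMod n) := by rw [h]
    rwa [ZMod.natCast_val, ZMod.cast_id] at this

lemma natCast_eq_natCast_iff_of_lt {b c : ℕ} (hb : b < n) (hc : c < n) :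
    (((b : ℕ)) : ZMod n) = ((c : ℕ) : ZMod n) ↔ b = c := by
  rw [eq_natCast_iff_val hc, ZMod.val_cast_of_lt hb]

section arr
variable (aA : Fin fA → ZMod n) (oA : Fin fA → ZMod m)
variable (aB : Fin fB → ZMod n) (oB : Fin fB → ZMod l)

lemma swArr_inl_inl (a b : ZMod n) :
    swArr n m l fA fB aA oA aB oB (Sum.inl a) (Sum.inl b) = if b = a + 1 then 1 else 0 := by
  simp [swArr, eq_comm]

lemma swArr_inrl_inl (j : ZMod m) (b : ZMod n) :
    swArr n m l fA fB aA oA aB oB (Sum.inr (Sum.inl j)) (Sum.inl b) =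
      if ∃ t, j = oA t ∧ b = aA t then 1 else 0 := by
  simp [swArr]

lemma swArr_inl_inrl (a : ZMod n) (j : ZMod m) :
    swArr n m l fA fB aA oA aB oB (Sum.inl a) (Sum.inr (Sum.inl j)) =
      if ∃ t, a = aA t ∧ j = oA (t - 1) then 1 else 0 := by
  simp [swArr]

lemma swArr_inrr_inl (k : ZMod l) (b : ZMod n) :
    swArr n m l fA fB aA oA aB oB (Sum.inr (Sum.inr k)) (Sum.inl b) =
      if ∃ t, k = oB t ∧ b = aB t then 1 else 0 := by
  simp [swArr]

lemma swArr_inl_inrr (a : ZMod n) (k : ZMod l) :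
    swArr n m l fA fB aA oA aB oB (Sum.inl a) (Sum.inr (Sum.inr k)) =
      if ∃ t, a = aB t ∧ k = oB (t - 1) then 1 else 0 := by
  simp [swArr]

lemma swB_skew (u v : SWV n m l) :
    swB n m l fA fB aA oA aB oB u v = - swB n m l fA fB aA oA aB oB v u := by
  simp [swB]

end arr

lemma mutB_skew {V : Type*} [DecidableEq V] [Fintype V] {B : V → V → ℤ}
    (hB : ∀ u v, B u v = - B v u) (k : V) (u v : V) :
    mutB B k u v = - mutB B k v u := by
  unfold mutB
  by_cases h : u = k ∨ v = k
  · rw [if_pos h, if_pos h.symm, hB u v]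
  · rw [if_neg h, if_neg fun hc => h hc.symm, hB v u, hB v k, hB k u]
    ring

end SWProof
namespace SWProof
open Finset

section Side

variable {N c w : ℕ} [NeZero N] [NeZero c] [NeZero w]
variable (f : Fin c → ZMod N) (g : Fin c → ZMod w)

lemma fin_val_sub_one {t : Fin c} (ht : t ≠ 0) : (t - 1).val = t.val - 1 := by
  rcases c with - | c'
  · exact t.elim0
  · rw [Fin.coe_sub_one, if_neg ht]

lemma fin_sub_one_ne_self (hc : 2 ≤ c) (t : Fin c) : t - 1 ≠ t := by
  intro h
  rw [sub_eq_self] at h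
  have := Fin.one_eq_zero_iff.mp h
  omega

/-- The set of attachment indices landing in `{1, …, p}`. -/
def SSet (p : ℕ) : Finset (Fin c) := Finset.univ.filter fun t => (f t).val + 1 ≤ p

lemma SSet_mem {f : Fin c → ZMod N} {p : ℕ} {t : Fin c} :
    t ∈ SSet f p ↔ (f t).val + 1 ≤ p := by
  simp [SSet]

open Classical in
/-- The claimed quiver column restricted to one of the side circles. -/
noncomputable def sideCol (p : ℕ) (j : ZMod w) : ℤ :=
  if ∃ hS : (SSet f (p + 1)).Nonempty, j = g ((SSet f (p + 1)).max' hS) then 1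
  else if (f 0).val = p ∧ j = g (0 - 1) then -1
  else 0

variable {f g}
variable (monoF : StrictMono fun t => (f t).val) (injG : Function.Injective g)

include monoF in
lemma t_eq_zero_of_val_zero {t : Fin c} (h : (f t).val = 0) : t = 0 := by
  rcases eq_or_ne t 0 with rfl | h'
  · rfl
  · have h2 : (0 : Fin c) < t := lt_of_le_of_ne (Fin.zero_le t) (Ne.symm h')
    have h3 := monoF h2
    change (f 0).val < (f t).val at h3
    omega

include monoF injG in
lemma side_base (hc : 2 ≤ c) (j : ZMod w) :
    sideCol f g 0 j
      = (if ∃ t, j = g t ∧ (0 : ZMod N) = f t then 1 else 0)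
        - (if ∃ t, (0 : ZMod N) = f t ∧ j = g (t - 1) then 1 else 0) := by
  have hval : ∀ t : Fin c, (0 : ZMod N) = f t ↔ (f t).val = 0 := fun t => by
    rw [eq_comm, ← ZMod.val_eq_zero]
  have h01 : (0 : Fin c) - 1 ≠ 0 := fin_sub_one_ne_self hc 0
  by_cases h0 : (f 0).val = 0
  · have hne : (SSet f (0 + 1)).Nonempty := ⟨0, SSet_mem.mpr (by omega)⟩
    have hmax : (SSet f (0 + 1)).max' hne = 0 := by
      apply le_antisymm
      · apply Finset.max'_le
        intro t ht
        rw [SSet_mem] at ht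
        have ht0 : t = 0 := t_eq_zero_of_val_zero monoF (by omega)
        exact le_of_eq ht0
      · exact Finset.le_max' _ _ (SSet_mem.mpr (by omega))
    have hcond : (∃ hS : (SSet f (0 + 1)).Nonempty,
        j = g ((SSet f (0 + 1)).max' hS)) ↔ j = g 0 :=
      ⟨fun ⟨hS, hj⟩ => by rwa [hmax] at hj, fun hj => ⟨hne, by rw [hmax]; exact hj⟩⟩
    by_cases hj : j = g 0
    · have r2 : ¬ ∃ t, (0 : ZMod N) = f t ∧ j = g (t - 1) := by
        rintro ⟨t, h1, h2⟩
        have ht0 : t = 0 := t_eq_zero_of_val_zero monoF ((hval t).mp h1)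
        subst ht0
        exact h01 (injG (h2.symm.trans hj))
      rw [sideCol, if_pos (hcond.mpr hj), if_pos ⟨0, hj, (hval 0).mpr h0⟩, if_neg r2]
      norm_num
    · by_cases hj2 : j = g (0 - 1)
      · have r1 : ¬ ∃ t, j = g t ∧ (0 : ZMod N) = f t := by
          rintro ⟨t, h1, h2⟩
          have ht0 : t = 0 := t_eq_zero_of_val_zero monoF ((hval t).mp h2)
          subst ht0
          exact hj h1
        rw [sideCol, if_neg (by rw [hcond]; exact hj), if_pos ⟨h0, hj2⟩,
          if_neg r1, if_pos ⟨0, (hval 0).mpr h0, hj2⟩]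
        norm_num
      · have r1 : ¬ ∃ t, j = g t ∧ (0 : ZMod N) = f t := by
          rintro ⟨t, h1, h2⟩
          have ht0 : t = 0 := t_eq_zero_of_val_zero monoF ((hval t).mp h2)
          subst ht0
          exact hj h1
        have r2 : ¬ ∃ t, (0 : ZMod N) = f t ∧ j = g (t - 1) := by
          rintro ⟨t, h1, h2⟩
          have ht0 : t = 0 := t_eq_zero_of_val_zero monoF ((hval t).mp h1)
          subst ht0
          exact hj2 h2
        rw [sideCol, if_neg (by rw [hcond]; exact hj),
          if_neg (by rintro ⟨-, h⟩; exact hj2 h), if_neg r1, if_neg r2]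
        norm_num
  · have hempty : ¬ (SSet f (0 + 1)).Nonempty := by
      rintro ⟨t, ht⟩
      rw [SSet_mem] at ht
      exact h0 (by
        have ht0 : t = 0 := t_eq_zero_of_val_zero monoF (by omega)
        subst ht0; omega)
    have r1 : ¬ ∃ t, j = g t ∧ (0 : ZMod N) = f t := by
      rintro ⟨t, h1, h2⟩
      have ht0 : t = 0 := t_eq_zero_of_val_zero monoF ((hval t).mp h2)
      subst ht0
      exact h0 ((hval 0).mp h2)
    have r2 : ¬ ∃ t, (0 : ZMod N) = f t ∧ j = g (t - 1) := by
      rintro ⟨t, h1, h2⟩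
      have ht0 : t = 0 := t_eq_zero_of_val_zero monoF ((hval t).mp h1)
      subst ht0
      exact h0 ((hval 0).mp h1)
    rw [sideCol, if_neg (fun ⟨hS, _⟩ => hempty hS),
      if_neg (by rintro ⟨h, -⟩; exact h0 h), if_neg r1, if_neg r2]
    norm_num

end Side
end SWProof
namespace SWProof
open Finset

section Side2

variable {N c w : ℕ} [NeZero N] [NeZero c] [NeZero w]
variable {f : Fin c → ZMod N} {g : Fin c → ZMod w}
variable (monoF : StrictMono fun t => (f t).val) (injG : Function.Injective g)

include monoF in
lemma monoF_val_lt {t t' : Fin c} (h : t < t') : (f t).val < (f t').val := by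
  have := monoF h
  change (f t).val < (f t').val at this
  exact this

include monoF in
lemma monoF_le_of_val_le {t t' : Fin c} (h : (f t).val ≤ (f t').val) : t ≤ t' := by
  by_contra hc
  push_neg at hc
  exact absurd (monoF_val_lt monoF hc) (by omega)

include monoF injG in
lemma side_step (hc : 2 ≤ c) {p : ℕ} (hp : p + 1 < N) (j : ZMod w) :
    sideCol f g (p + 1) j
      = (if ∃ t, j = g t ∧ (((p + 1 : ℕ)) : ZMod N) = f t then 1 else 0)
        - (if ∃ t, (((p + 1 : ℕ)) : ZMod N) = f t ∧ j = g (t - 1) then 1 else 0)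
        + max (sideCol f g p j) 0 := by
  have hval : ∀ t : Fin c, (((p + 1 : ℕ)) : ZMod N) = f t ↔ (f t).val = p + 1 := fun t => by
    rw [eq_comm, eq_natCast_iff_val hp]
  by_cases hex : ∃ t1, (f t1).val = p + 1
  · obtain ⟨t1, ht1⟩ := hex
    have huniq : ∀ t, (f t).val = p + 1 → t = t1 := fun t h =>
      monoF.injective (by change (f t).val = (f t1).val; omega)
    have hne2 : (SSet f (p + 1 + 1)).Nonempty := ⟨t1, SSet_mem.mpr (by omega)⟩
    have hmax2 : (SSet f (p + 1 + 1)).max' hne2 = t1 := by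
      apply le_antisymm
      · apply Finset.max'_le
        intro t ht
        rw [SSet_mem] at ht
        exact monoF_le_of_val_le monoF (by omega)
      · exact Finset.le_max' _ _ (SSet_mem.mpr (by omega))
    have hcond2 : (∃ hS : (SSet f (p + 1 + 1)).Nonempty,
        j = g ((SSet f (p + 1 + 1)).max' hS)) ↔ j = g t1 :=
      ⟨fun ⟨hS, hj⟩ => by rwa [hmax2] at hj, fun hj => ⟨hne2, by rw [hmax2]; exact hj⟩⟩
    -- structure of `SSet f (p+1)` relative to `t1`
    have hSS1 : ∀ hS : (SSet f (p + 1)).Nonempty,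
        t1 ≠ 0 ∧ (SSet f (p + 1)).max' hS = t1 - 1 := by
      intro hS
      have h10 : t1 ≠ 0 := by
        rintro rfl
        obtain ⟨t, ht⟩ := hS
        rw [SSet_mem] at ht
        have h2 : (0 : Fin c) ≤ t := Fin.zero_le t
        rcases eq_or_lt_of_le h2 with h3 | h3
        · rw [← h3] at ht; omega
        · have := monoF_val_lt monoF h3; omega
      have hv10 : t1.val ≠ 0 := fun h => h10 (Fin.ext (by simpa using h))
      have hlt : t1 - 1 < t1 := by
        rw [Fin.lt_def, fin_val_sub_one h10]
        omega
      have hmem : t1 - 1 ∈ SSet f (p + 1) := by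
        rw [SSet_mem]
        have := monoF_val_lt monoF hlt
        omega
      refine ⟨h10, le_antisymm ?_ (Finset.le_max' _ _ hmem)⟩
      apply Finset.max'_le
      intro t ht
      rw [SSet_mem] at ht
      have htlt : t < t1 := by
        by_contra hcon
        push_neg at hcon
        rcases eq_or_lt_of_le hcon with h3 | h3
        · rw [← h3] at ht; omega
        · have := monoF_val_lt monoF h3; omega
      rw [Fin.le_def, fin_val_sub_one h10]
      rw [Fin.lt_def] at htlt
      omega
    by_cases hj1 : j = g t1
    · have r1 : ∃ t, j = g t ∧ (((p + 1 : ℕ)) : ZMod N) = f t :=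
        ⟨t1, hj1, (hval t1).mpr ht1⟩
      have r2 : ¬ ∃ t, (((p + 1 : ℕ)) : ZMod N) = f t ∧ j = g (t - 1) := by
        rintro ⟨t, h1, h2⟩
        have := huniq t ((hval t).mp h1)
        subst this
        exact fin_sub_one_ne_self hc t (injG (h2.symm.trans hj1))
      have hmid : sideCol f g p j ≤ 0 := by
        rw [sideCol]
        split_ifs with h1 h2
        · exfalso
          obtain ⟨hS, hj⟩ := h1
          have hmem := Finset.max'_mem _ hS
          rw [SSet_mem] at hmem
          have := (hSS1 hS).2
          rw [this] at hj
          have h6 := injG (hj1.symm.trans hj)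
          exact fin_sub_one_ne_self hc t1 h6.symm
        · omega
        · omega
      rw [sideCol, if_pos (hcond2.mpr hj1), if_pos r1, if_neg r2, max_eq_right hmid]
      norm_num
    · by_cases hj2 : j = g (t1 - 1)
      · have r1 : ¬ ∃ t, j = g t ∧ (((p + 1 : ℕ)) : ZMod N) = f t := by
          rintro ⟨t, h1, h2⟩
          have := huniq t ((hval t).mp h2)
          subst this
          exact hj1 h1
        have r2 : ∃ t, (((p + 1 : ℕ)) : ZMod N) = f t ∧ j = g (t - 1) :=
          ⟨t1, (hval t1).mpr ht1, hj2⟩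
        by_cases h10 : t1 = 0
        · subst h10
          have hempty : ¬ (SSet f (p + 1)).Nonempty := fun hS => (hSS1 hS).1 rfl
          have hmid : sideCol f g p j = 0 := by
            rw [sideCol, if_neg (fun ⟨hS, _⟩ => hempty hS), if_neg ?_]
            rintro ⟨h1, -⟩
            omega
          rw [sideCol, if_neg (by rw [hcond2]; exact hj1), if_pos ⟨ht1, hj2⟩,
            if_neg r1, if_pos r2, hmid]
          norm_num
        · have hmid : sideCol f g p j = 1 := by
            have hne1 : (SSet f (p + 1)).Nonempty := by
              refine ⟨t1 - 1, SSet_mem.mpr ?_⟩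
              have hlt : t1 - 1 < t1 := by
                rw [Fin.lt_def, fin_val_sub_one h10]
                have : t1.val ≠ 0 := fun h => h10 (Fin.ext (by simpa using h))
                omega
              have := monoF_val_lt monoF hlt
              omega
            rw [sideCol, if_pos ⟨hne1, by rw [(hSS1 hne1).2]; exact hj2⟩]
          have lhs0 : sideCol f g (p + 1) j = 0 := by
            rw [sideCol, if_neg (by rw [hcond2]; exact hj1), if_neg ?_]
            rintro ⟨h1, -⟩
            exact h10 (huniq 0 h1).symm
          rw [lhs0, if_neg r1, if_pos r2, hmid]
          norm_num
      · have r1 : ¬ ∃ t, j = g t ∧ (((p + 1 : ℕ)) : ZMod N) = f t := by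
          rintro ⟨t, h1, h2⟩
          have := huniq t ((hval t).mp h2)
          subst this
          exact hj1 h1
        have r2 : ¬ ∃ t, (((p + 1 : ℕ)) : ZMod N) = f t ∧ j = g (t - 1) := by
          rintro ⟨t, h1, h2⟩
          have := huniq t ((hval t).mp h1)
          subst this
          exact hj2 h2
        have hmid : sideCol f g p j ≤ 0 := by
          rw [sideCol]
          split_ifs with h1 h2
          · exfalso
            obtain ⟨hS, hj⟩ := h1
            rw [(hSS1 hS).2] at hj
            exact hj2 hj
          · omega
          · omega
        have lhs0 : sideCol f g (p + 1) j = 0 := by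
          rw [sideCol, if_neg (by rw [hcond2]; exact hj1), if_neg ?_]
          rintro ⟨h1, h2⟩
          have := huniq 0 h1
          exact hj2 (by rw [← this]; exact h2)
        rw [lhs0, if_neg r1, if_neg r2, max_eq_right hmid]
        norm_num
  · push_neg at hex
    have hSeq : SSet f (p + 1 + 1) = SSet f (p + 1) := by
      ext t
      rw [SSet_mem, SSet_mem]
      have := hex t
      omega
    have r1 : ¬ ∃ t, j = g t ∧ (((p + 1 : ℕ)) : ZMod N) = f t := by
      rintro ⟨t, -, h2⟩
      exact hex t ((hval t).mp h2)
    have r2 : ¬ ∃ t, (((p + 1 : ℕ)) : ZMod N) = f t ∧ j = g (t - 1) := by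
      rintro ⟨t, h1, -⟩
      exact hex t ((hval t).mp h1)
    rw [if_neg r1, if_neg r2]
    rw [sideCol, sideCol]
    simp only [hSeq]
    split_ifs with h1 h2 h3 <;>
      first
        | (exact absurd h2.1 (hex 0))
        | simp
  end Side2
end SWProof
namespace SWProof
open Finset

section Col

variable {n m l fA fB : ℕ} [NeZero n] [NeZero m] [NeZero l] [NeZero fA] [NeZero fB]
variable (aA : Fin fA → ZMod n) (oA : Fin fA → ZMod m)
variable (aB : Fin fB → ZMod n) (oB : Fin fB → ZMod l)

lemma inj_of_val_strictMono {c w : ℕ} {h : Fin c → ZMod w}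
    (mono : StrictMono fun t => (h t).val) : Function.Injective h := fun t t' e =>
  mono.injective (by show (h t).val = (h t').val; rw [e])

/-- The claimed column of the quiver at the vertex about to be mutated. -/
noncomputable def colF (p : ℕ) : SWV n m l → ℤ
  | Sum.inl a =>
      if a = ((n - 1 : ℕ) : ZMod n) then 1
      else if 1 ≤ p ∧ a = ((p - 1 : ℕ) : ZMod n) then -1
      else if a = ((p + 1 : ℕ) : ZMod n) then -1
      else 0
  | Sum.inr (Sum.inl j) => sideCol aA oA p j
  | Sum.inr (Sum.inr k) => sideCol aB oB p k

lemma zero_eq_add_one_iff (hn : 1 ≤ n) (a : ZMod n) :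
    (0 : ZMod n) = a + 1 ↔ a = ((n - 1 : ℕ) : ZMod n) := by
  rw [eq_comm, add_eq_zero_iff_eq_neg, natCast_nsub_one_eq_neg_one hn]

lemma succCast_eq_add_one_iff (q : ℕ) (a : ZMod n) :
    ((q + 1 : ℕ) : ZMod n) = a + 1 ↔ a = ((q : ℕ) : ZMod n) := by
  push_cast
  rw [add_left_inj, eq_comm]

lemma base_col (hsw : IsSpiderWeb n m l fA fB aA oA aB oB) (v : SWV n m l) :
    swB n m l fA fB aA oA aB oB v (Sum.inl ((0 : ℕ) : ZMod n))
      = colF aA oA aB oB 0 v := by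
  have hn := hsw.hn
  rcases v with a | j | k
  · have hvlt : a.val < n := a.val_lt
    simp only [swB, swArr_inl_inl, colF, Nat.cast_ite, Nat.cast_one, Nat.cast_zero]
    simp only [zero_eq_add_one_iff (show 1 ≤ n by omega),
      show (0 : ZMod n) + 1 = ((0 + 1 : ℕ) : ZMod n) by push_cast; ring]
    simp only [eq_natCast_iff_val (show n - 1 < n by omega),
      eq_natCast_iff_val (show 0 + 1 < n by omega),
      eq_natCast_iff_val (show 0 - 1 < n by omega)]
    split_ifs <;> omega
  · simp only [swB, swArr_inrl_inl, swArr_inl_inrl, colF, Nat.cast_zero,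
      Nat.cast_ite, Nat.cast_one]
    exact (side_base hsw.monoAA (inj_of_val_strictMono hsw.monoOA) hsw.hfA j).symm
  · simp only [swB, swArr_inrr_inl, swArr_inl_inrr, colF, Nat.cast_zero,
      Nat.cast_ite, Nat.cast_one]
    exact (side_base hsw.monoAB (inj_of_val_strictMono hsw.monoOB) hsw.hfB k).symm

lemma step_col (hsw : IsSpiderWeb n m l fA fB aA oA aB oB) {p : ℕ} (hp : p + 4 ≤ n)
    (v : SWV n m l) :
    colF aA oA aB oB (p + 1) v
      = if v = Sum.inl ((p : ℕ) : ZMod n) then -1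
        else swB n m l fA fB aA oA aB oB v (Sum.inl (((p + 1 : ℕ)) : ZMod n))
          + max (colF aA oA aB oB p v) 0 := by
  rcases v with a | j | k
  · have hvlt : a.val < n := a.val_lt
    simp only [swB, swArr_inl_inl, colF, Sum.inl.injEq, Nat.add_sub_cancel,
      Nat.cast_ite, Nat.cast_one, Nat.cast_zero]
    simp only [succCast_eq_add_one_iff,
      show ((p + 1 : ℕ) : ZMod n) + 1 = ((p + 1 + 1 : ℕ) : ZMod n) by push_cast; ring]
    simp only [eq_natCast_iff_val (show n - 1 < n by omega),
      eq_natCast_iff_val (show p + 1 + 1 < n by omega),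
      eq_natCast_iff_val (show p < n by omega),
      eq_natCast_iff_val (show p - 1 < n by omega),
      eq_natCast_iff_val (show p + 1 < n by omega)]
    split_ifs <;> omega
  · rw [if_neg (by simp)]
    simp only [swB, swArr_inrl_inl, swArr_inl_inrl, colF, Nat.cast_ite, Nat.cast_one,
      Nat.cast_zero]
    exact side_step hsw.monoAA (inj_of_val_strictMono hsw.monoOA) hsw.hfA
      (show p + 1 < n by omega) j
  · rw [if_neg (by simp)]
    simp only [swB, swArr_inrr_inl, swArr_inl_inrr, colF, Nat.cast_ite, Nat.cast_one,
      Nat.cast_zero]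
    exact side_step hsw.monoAB (inj_of_val_strictMono hsw.monoOB) hsw.hfB
      (show p + 1 < n by omega) k

end Col
end SWProof
namespace SWProof
open Finset

section Prod1

variable {N c w : ℕ} [NeZero N] [NeZero c] [NeZero w]
variable {f : Fin c → ZMod N} {g : Fin c → ZMod w}

lemma side_prod (y' : ZMod w → ℝ) (p : ℕ) :
    (∏ j, y' j ^ (sideCol f g p j).toNat)
      = if hS : (SSet f (p + 1)).Nonempty then y' (g ((SSet f (p + 1)).max' hS)) else 1 := by
  by_cases hS : (SSet f (p + 1)).Nonempty
  · rw [dif_pos hS]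
    have h1 : (∏ j, y' j ^ (sideCol f g p j).toNat)
        = y' (g ((SSet f (p + 1)).max' hS)) ^ (sideCol f g p (g ((SSet f (p + 1)).max' hS))).toNat := by
      apply Finset.prod_eq_single
      · intro b _ hb
        rw [sideCol]
        split_ifs with h1 h2
        · obtain ⟨hS', hb'⟩ := h1
          exact absurd hb' hb
        · simp
        · simp
      · intro h
        exact absurd (Finset.mem_univ _) h
    rw [h1, sideCol, if_pos ⟨hS, rfl⟩]
    simp
  · rw [dif_neg hS]
    apply Finset.prod_eq_one
    intro b _
    rw [sideCol, if_neg (fun ⟨hS', _⟩ => hS hS'), ]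
    split_ifs <;> simp

lemma side_prod_neg (monoF : StrictMono fun t => (f t).val)
    (injG : Function.Injective g) (hc : 2 ≤ c) (y' : ZMod w → ℝ) (p : ℕ) :
    (∏ j, y' j ^ (-(sideCol f g p j)).toNat)
      = if (f 0).val = p then y' (g (0 - 1)) else 1 := by
  by_cases h0 : (f 0).val = p
  · rw [if_pos h0]
    have hne : (SSet f (p + 1)).Nonempty := ⟨0, SSet_mem.mpr (by omega)⟩
    have hmax : ∀ hS : (SSet f (p + 1)).Nonempty, (SSet f (p + 1)).max' hS = 0 := by
      intro hS
      apply le_antisymm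
      · apply Finset.max'_le
        intro t ht
        rw [SSet_mem] at ht
        exact monoF_le_of_val_le monoF (by omega)
      · exact Finset.le_max' _ _ (SSet_mem.mpr (by omega))
    have hne01 : g (0 - 1) ≠ g 0 := fun h => fin_sub_one_ne_self hc 0 (injG h)
    have h1 : (∏ j, y' j ^ (-(sideCol f g p j)).toNat)
        = y' (g (0 - 1)) ^ (-(sideCol f g p (g (0 - 1)))).toNat := by
      apply Finset.prod_eq_single
      · intro b _ hb
        rw [sideCol]
        split_ifs with h1 h2
        · simp
        · exact absurd h2.2 hb
        · simp
      · intro h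
        exact absurd (Finset.mem_univ _) h
    rw [h1, sideCol, if_neg ?_, if_pos ⟨h0, rfl⟩]
    · simp
    · rintro ⟨hS, hj⟩
      rw [hmax hS] at hj
      exact hne01 hj
  · rw [if_neg h0]
    apply Finset.prod_eq_one
    intro b _
    rw [sideCol]
    split_ifs with h1 h2
    · simp
    · exact absurd h2.1 h0
    · simp

end Prod1

end SWProof
namespace SWProof
open Finset

section Prod2

variable {n m l fA fB : ℕ} [NeZero n] [NeZero m] [NeZero l] [NeZero fA] [NeZero fB]
variable (aA : Fin fA → ZMod n) (oA : Fin fA → ZMod m)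
variable (aB : Fin fB → ZMod n) (oB : Fin fB → ZMod l)

lemma prod_mid_pos (y1 : ZMod n → ℝ) (p : ℕ) :
    (∏ a : ZMod n, y1 a ^
      (if a = ((n - 1 : ℕ) : ZMod n) then (1 : ℤ)
        else if 1 ≤ p ∧ a = ((p - 1 : ℕ) : ZMod n) then -1
        else if a = ((p + 1 : ℕ) : ZMod n) then -1 else 0).toNat)
      = y1 (((n - 1 : ℕ)) : ZMod n) := by
  have h1 := Fintype.prod_eq_single (f := fun a => y1 a ^
      (if a = ((n - 1 : ℕ) : ZMod n) then (1 : ℤ)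
        else if 1 ≤ p ∧ a = ((p - 1 : ℕ) : ZMod n) then -1
        else if a = ((p + 1 : ℕ) : ZMod n) then -1 else 0).toNat)
    (((n - 1 : ℕ)) : ZMod n)
    (fun b hb => by
      beta_reduce
      rw [if_neg hb]
      split_ifs <;> simp)
  rw [h1]
  simp

lemma prod_mid_neg {p : ℕ} (hp : p + 3 ≤ n) (y1 : ZMod n → ℝ) :
    (∏ a : ZMod n, y1 a ^
      (-(if a = ((n - 1 : ℕ) : ZMod n) then (1 : ℤ)
        else if 1 ≤ p ∧ a = ((p - 1 : ℕ) : ZMod n) then -1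
        else if a = ((p + 1 : ℕ) : ZMod n) then -1 else 0)).toNat)
      = (if 1 ≤ p then y1 (((p - 1 : ℕ)) : ZMod n) else 1) * y1 (((p + 1 : ℕ)) : ZMod n) := by
  have c2 : ¬ ((p + 1 : ℕ) : ZMod n) = ((n - 1 : ℕ) : ZMod n) := by
    rw [natCast_eq_natCast_iff_of_lt (by omega) (by omega)]
    omega
  rcases Nat.eq_zero_or_pos p with rfl | hp1
  · have h1 := Fintype.prod_eq_single (f := fun a => y1 a ^
        (-(if a = ((n - 1 : ℕ) : ZMod n) then (1 : ℤ)
          else if 1 ≤ 0 ∧ a = ((0 - 1 : ℕ) : ZMod n) then -1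
          else if a = ((0 + 1 : ℕ) : ZMod n) then -1 else 0)).toNat)
      (((0 + 1 : ℕ)) : ZMod n)
      (fun b hb => by
        beta_reduce
        split_ifs <;> simp_all)
    rw [h1]
    beta_reduce
    rw [if_neg c2, if_neg (by simp), if_pos rfl, if_neg (by omega)]
    norm_num
  · have hne : ((p - 1 : ℕ) : ZMod n) ≠ ((p + 1 : ℕ) : ZMod n) := by
      rw [Ne, natCast_eq_natCast_iff_of_lt (by omega) (by omega)]
      omega
    have c1 : ¬ ((p - 1 : ℕ) : ZMod n) = ((n - 1 : ℕ) : ZMod n) := by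
      rw [natCast_eq_natCast_iff_of_lt (by omega) (by omega)]
      omega
    have hf : ∀ x ∈ (Finset.univ : Finset (ZMod n)),
        x ∉ ({((p - 1 : ℕ) : ZMod n), ((p + 1 : ℕ) : ZMod n)} : Finset (ZMod n)) →
        y1 x ^
          (-(if x = ((n - 1 : ℕ) : ZMod n) then (1 : ℤ)
            else if 1 ≤ p ∧ x = ((p - 1 : ℕ) : ZMod n) then -1
            else if x = ((p + 1 : ℕ) : ZMod n) then -1 else 0)).toNat = 1 := by
      intro b _ hb
      simp only [Finset.mem_insert, Finset.mem_singleton, not_or] at hb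
      split_ifs with e1 e2 e3
      · simp
      · exact absurd e2.2 hb.1
      · exact absurd e3 hb.2
      · simp
    rw [← Finset.prod_subset
      (Finset.subset_univ ({((p - 1 : ℕ) : ZMod n), ((p + 1 : ℕ) : ZMod n)} :
        Finset (ZMod n))) hf]
    rw [Finset.prod_insert (by simpa using hne), Finset.prod_singleton]
    rw [if_pos (show (1 : ℕ) ≤ p from hp1)]
    rw [if_neg c1, if_pos ⟨hp1, rfl⟩, if_neg c2,
      if_neg (by rintro ⟨-, h⟩; exact hne h.symm), if_pos rfl]
    norm_num

lemma prod_colV (y : SWV n m l → ℝ) (p : ℕ) :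
    (∏ v, y v ^ (colF aA oA aB oB p v).toNat)
      = y (Sum.inl ((n - 1 : ℕ) : ZMod n)) * xjm n m l fA aA oA y (p + 1)
        * xjp n m l fB aB oB y (p + 1) := by
  rw [Fintype.prod_sum_type, Fintype.prod_sum_type]
  simp only [colF]
  rw [prod_mid_pos (fun a => y (Sum.inl a)) p]
  have ho := side_prod (f := aA) (g := oA) (fun j => y (Sum.inr (Sum.inl j))) p
  have hi := side_prod (f := aB) (g := oB) (fun k => y (Sum.inr (Sum.inr k))) p
  rw [ho, hi]
  simp only [xjm, xjp, SSet]
  exact (mul_assoc _ _ _).symm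

lemma xkA_eq (y : SWV n m l → ℝ) (p : ℕ) :
    xkA n m l fA aA oA y (p + 1)
      = if (aA 0).val = p then y (Sum.inr (Sum.inl (oA (0 - 1)))) else 1 := by
  by_cases h : (aA 0).val = p
  · rw [xkA, if_pos (by omega), if_pos h]
  · rw [xkA, if_neg (by omega), if_neg h]

lemma xkB_eq (y : SWV n m l → ℝ) (p : ℕ) :
    xkB n m l fB aB oB y (p + 1)
      = if (aB 0).val = p then y (Sum.inr (Sum.inr (oB (0 - 1)))) else 1 := by
  by_cases h : (aB 0).val = p
  · rw [xkB, if_pos (by omega), if_pos h]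
  · rw [xkB, if_neg (by omega), if_neg h]

lemma prod_negcolV (hsw : IsSpiderWeb n m l fA fB aA oA aB oB) {p : ℕ} (hp : p + 3 ≤ n)
    (y : SWV n m l → ℝ) :
    (∏ v, y v ^ (-(colF aA oA aB oB p v)).toNat)
      = (if 1 ≤ p then y (Sum.inl ((p - 1 : ℕ) : ZMod n)) else 1)
        * y (Sum.inl ((p + 1 : ℕ) : ZMod n))
        * xkA n m l fA aA oA y (p + 1) * xkB n m l fB aB oB y (p + 1) := by
  rw [Fintype.prod_sum_type, Fintype.prod_sum_type]
  simp only [colF]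
  rw [prod_mid_neg hp (fun a => y (Sum.inl a))]
  rw [side_prod_neg hsw.monoAA (inj_of_val_strictMono hsw.monoOA) hsw.hfA
    (fun j => y (Sum.inr (Sum.inl j))) p]
  rw [side_prod_neg hsw.monoAB (inj_of_val_strictMono hsw.monoOB) hsw.hfB
    (fun k => y (Sum.inr (Sum.inr k))) p]
  rw [← xkA_eq aA oA y p, ← xkB_eq aB oB y p]
  ring

end Prod2
end SWProof
namespace SWProof
open Finset

section FxSec

variable {n m l fA fB : ℕ} [NeZero n] [NeZero m] [NeZero l] [NeZero fA] [NeZero fB]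
variable (aA : Fin fA → ZMod n) (oA : Fin fA → ZMod m)
variable (aB : Fin fB → ZMod n) (oB : Fin fB → ZMod l)

/-- The claimed value of the `i`-th mutated variable. -/
noncomputable def Fx (x : SWV n m l → ℝ) (i : ℕ) : ℝ :=
  (∑ j ∈ Finset.range (i + 1),
      xjm n m l fA aA oA x j * xjp n m l fB aB oB x j *
        (∏ k ∈ Finset.range j, xm n m l x k) *
        ∏ k ∈ Finset.Icc (j + 1) i,
          (xm n m l x (k + 1) * xkA n m l fA aA oA x k * xkB n m l fB aB oB x k)) /
    ∏ k ∈ Finset.Icc 1 i, xm n m l x k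

lemma Fx_zero (x : SWV n m l → ℝ) : Fx aA oA aB oB x 0 = 1 := by
  have h0 : Finset.Icc 1 0 = (∅ : Finset ℕ) := Finset.Icc_eq_empty (by omega)
  have hA : ¬ (Finset.univ.filter fun t : Fin fA => (aA t).val + 1 ≤ 0).Nonempty := by
    simp
  have hB : ¬ (Finset.univ.filter fun t : Fin fB => (aB t).val + 1 ≤ 0).Nonempty := by
    simp
  rw [Fx, Finset.sum_range_one, h0, Finset.prod_empty, Finset.prod_range_zero,
    xjm, dif_neg hA, xjp, dif_neg hB]
  norm_num

lemma Fx_rec (x : SWV n m l → ℝ) (hx : ∀ v, 0 < x v) (p : ℕ) :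
    Fx aA oA aB oB x (p + 1) * xm n m l x (p + 1)
      = xm n m l x (p + 1 + 1) * xkA n m l fA aA oA x (p + 1) * xkB n m l fB aB oB x (p + 1)
          * Fx aA oA aB oB x p
        + xm n m l x 0 * xjm n m l fA aA oA x (p + 1) * xjp n m l fB aB oB x (p + 1) := by
  have hD : (∏ k ∈ Finset.Icc 1 p, xm n m l x k) ≠ 0 :=
    ne_of_gt (Finset.prod_pos fun _ _ => hx _)
  have hxm : xm n m l x (p + 1) ≠ 0 := ne_of_gt (hx _)
  have hrange : (∏ k ∈ Finset.range (p + 1), xm n m l x k)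
      = xm n m l x 0 * ∏ k ∈ Finset.Icc 1 p, xm n m l x k := by
    rw [Finset.prod_range_succ', ← Finset.Ico_add_one_right_eq_Icc, Finset.prod_Ico_eq_prod_range]
    simp only [Nat.add_sub_cancel_left, Nat.add_sub_cancel, Nat.succ_sub_one]
    rw [mul_comm]
    congr 1
    apply Finset.prod_congr rfl
    intro i _
    rw [Nat.add_comm]
  have key : (∑ j ∈ Finset.range (p + 1 + 1),
        xjm n m l fA aA oA x j * xjp n m l fB aB oB x j *
          (∏ k ∈ Finset.range j, xm n m l x k) *
          ∏ k ∈ Finset.Icc (j + 1) (p + 1),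
            (xm n m l x (k + 1) * xkA n m l fA aA oA x k * xkB n m l fB aB oB x k))
      = (∑ j ∈ Finset.range (p + 1),
          xjm n m l fA aA oA x j * xjp n m l fB aB oB x j *
            (∏ k ∈ Finset.range j, xm n m l x k) *
            ∏ k ∈ Finset.Icc (j + 1) p,
              (xm n m l x (k + 1) * xkA n m l fA aA oA x k * xkB n m l fB aB oB x k))
          * (xm n m l x (p + 1 + 1) * xkA n m l fA aA oA x (p + 1)
              * xkB n m l fB aB oB x (p + 1))
        + xm n m l x 0 * xjm n m l fA aA oA x (p + 1) * xjp n m l fB aB oB x (p + 1)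
          * ∏ k ∈ Finset.Icc 1 p, xm n m l x k := by
    rw [Finset.sum_range_succ]
    congr 1
    · rw [Finset.sum_mul]
      apply Finset.sum_congr rfl
      intro j hj
      rw [Finset.mem_range] at hj
      rw [Finset.prod_Icc_succ_top (by omega : j + 1 ≤ p + 1)]
      ring
    · rw [Finset.Icc_eq_empty (by omega : ¬ p + 1 + 1 ≤ p + 1), Finset.prod_empty,
        hrange]
      ring
  rw [Fx, Fx, key, Finset.prod_Icc_succ_top (by omega : 1 ≤ p + 1)]
  field_simp

end FxSec
end SWProof
namespace SWProof
open Finset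

section Main

variable {n m l fA fB : ℕ} [NeZero n] [NeZero m] [NeZero l] [NeZero fA] [NeZero fB]
variable (aA : Fin fA → ZMod n) (oA : Fin fA → ZMod m)
variable (aB : Fin fB → ZMod n) (oB : Fin fB → ZMod l)

/-- The seed after the first `p` mutations. -/
noncomputable def seq (x : SWV n m l → ℝ) (p : ℕ) :
    (SWV n m l → SWV n m l → ℤ) × (SWV n m l → ℝ) :=
  ((List.range p).map fun s => (Sum.inl ((s : ZMod n)) : SWV n m l)).foldl stepX
    (swB n m l fA fB aA oA aB oB, x)

lemma seq_succ (x : SWV n m l → ℝ) (p : ℕ) :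
    seq aA oA aB oB x (p + 1)
      = stepX (seq aA oA aB oB x p) (Sum.inl ((p : ZMod n))) := by
  have h : (List.range (p + 1)).map (fun s => (Sum.inl ((s : ZMod n)) : SWV n m l))
      = ((List.range p).map fun s => (Sum.inl ((s : ZMod n)) : SWV n m l))
        ++ [Sum.inl ((p : ZMod n))] := by
    simp [List.range_succ]
  rw [seq, h, List.foldl_append]
  rfl

lemma colF_inl_eval {p q : ℕ} (hq : q < n) (hp1 : p + 1 < n) :
    colF aA oA aB oB p (Sum.inl ((q : ZMod n)))
      = if q = n - 1 then 1
        else if 1 ≤ p ∧ q = p - 1 then -1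
        else if q = p + 1 then -1
        else 0 := by
  simp only [colF]
  simp only [natCast_eq_natCast_iff_of_lt hq (show n - 1 < n by omega),
    natCast_eq_natCast_iff_of_lt hq (show p - 1 < n by omega),
    natCast_eq_natCast_iff_of_lt hq hp1]

lemma swB_inl_inl_eval {a b : ℕ} (ha : a + 1 < n) (hb : b + 1 < n) :
    swB n m l fA fB aA oA aB oB (Sum.inl ((a : ZMod n))) (Sum.inl ((b : ZMod n)))
      = (if b = a + 1 then 1 else 0) - (if a = b + 1 then 1 else 0) := by
  rw [swB, swArr_inl_inl, swArr_inl_inl]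
  rw [show ((a : ZMod n)) + 1 = ((a + 1 : ℕ) : ZMod n) by push_cast; ring,
    show ((b : ZMod n)) + 1 = ((b + 1 : ℕ) : ZMod n) by push_cast; ring]
  simp only [natCast_eq_natCast_iff_of_lt (show b < n by omega) ha,
    natCast_eq_natCast_iff_of_lt (show a < n by omega) hb]
  split_ifs <;> simp

lemma xjm_congr {y x : SWV n m l → ℝ} (h : ∀ w, y (Sum.inr w) = x (Sum.inr w)) (j : ℕ) :
    xjm n m l fA aA oA y j = xjm n m l fA aA oA x j := by
  rw [xjm, xjm]
  by_cases hS : (Finset.univ.filter fun t : Fin fA => (aA t).val + 1 ≤ j).Nonempty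
  · rw [dif_pos hS, dif_pos hS, h]
  · rw [dif_neg hS, dif_neg hS]

lemma xjp_congr {y x : SWV n m l → ℝ} (h : ∀ w, y (Sum.inr w) = x (Sum.inr w)) (j : ℕ) :
    xjp n m l fB aB oB y j = xjp n m l fB aB oB x j := by
  rw [xjp, xjp]
  by_cases hS : (Finset.univ.filter fun t : Fin fB => (aB t).val + 1 ≤ j).Nonempty
  · rw [dif_pos hS, dif_pos hS, h]
  · rw [dif_neg hS, dif_neg hS]

lemma xkA_congr {y x : SWV n m l → ℝ} (h : ∀ w, y (Sum.inr w) = x (Sum.inr w)) (j : ℕ) :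
    xkA n m l fA aA oA y j = xkA n m l fA aA oA x j := by
  rw [xkA, xkA]
  split_ifs with hc
  · exact h _
  · rfl

lemma xkB_congr {y x : SWV n m l → ℝ} (h : ∀ w, y (Sum.inr w) = x (Sum.inr w)) (j : ℕ) :
    xkB n m l fB aB oB y j = xkB n m l fB aB oB x j := by
  rw [xkB, xkB]
  split_ifs with hc
  · exact h _
  · rfl

lemma midV_cast {a : ℕ} (ha : 1 ≤ a) :
    midV n m l a = (Sum.inl (((a - 1 : ℕ)) : ZMod n) : SWV n m l) := by
  rw [midV]
  congr 1
  have h : a + (n - 1) = (a - 1) + n := by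
    have := NeZero.pos n
    omega
  rw [h]
  push_cast [ZMod.natCast_self]
  ring

lemma xm_zero_eq (x : SWV n m l → ℝ) :
    xm n m l x 0 = x (Sum.inl (((n - 1 : ℕ)) : ZMod n)) := by
  rw [xm, midV]
  norm_num

lemma invariant (hsw : IsSpiderWeb n m l fA fB aA oA aB oB)
    (x : SWV n m l → ℝ) (hx : ∀ v, 0 < x v) (p : ℕ) (hp : p ≤ n - 2) :
    (∀ u v, (seq aA oA aB oB x p).1 u v = - (seq aA oA aB oB x p).1 v u)
    ∧ (p ≤ n - 3 → ∀ v, (seq aA oA aB oB x p).1 v (Sum.inl ((p : ZMod n)))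
        = colF aA oA aB oB p v)
    ∧ (∀ q, p < q → q ≤ n - 3 → ∀ v,
        (seq aA oA aB oB x p).1 v (Sum.inl ((q : ZMod n)))
          = swB n m l fA fB aA oA aB oB v (Sum.inl ((q : ZMod n))))
    ∧ (∀ v, (∀ q, q < p → v ≠ Sum.inl ((q : ZMod n))) → (seq aA oA aB oB x p).2 v = x v)
    ∧ (1 ≤ p → (seq aA oA aB oB x p).2 (Sum.inl (((p - 1 : ℕ)) : ZMod n))
        = Fx aA oA aB oB x p) := by
  have hn := hsw.hn
  induction p with
  | zero =>
    refine ⟨fun u v => swB_skew aA oA aB oB u v, fun _ v => ?_, fun q _ _ v => rfl,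
      fun v _ => rfl, fun h => absurd h (by omega)⟩
    exact base_col aA oA aB oB hsw v
  | succ p ih =>
    obtain ⟨ihSkew, ihB, ihC, ihD, ihE⟩ := ih (by omega)
    have hp3 : p ≤ n - 3 := by omega
    have hB := ihB hp3
    set B := (seq aA oA aB oB x p).1 with hBdef
    set y := (seq aA oA aB oB x p).2 with hydef
    have hstep : seq aA oA aB oB x (p + 1)
        = (mutB B (Sum.inl ((p : ZMod n))), mutX B (Sum.inl ((p : ZMod n))) y) :=
      seq_succ aA oA aB oB x p
    -- basic distinctness
    have hne1 : (Sum.inl (((p + 1 : ℕ)) : ZMod n) : SWV n m l) ≠ Sum.inl ((p : ZMod n)) := by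
      simp only [Ne, Sum.inl.injEq]
      rw [natCast_eq_natCast_iff_of_lt (by omega) (by omega)]
      omega
    have hcolsucc : colF aA oA aB oB p (Sum.inl (((p + 1 : ℕ)) : ZMod n)) = -1 := by
      rw [colF_inl_eval aA oA aB oB (by omega) (by omega)]
      have : ¬ (p + 1 = n - 1) := by omega
      rw [if_neg this, if_neg (by omega), if_pos rfl]
    have hskew' : ∀ u v, (seq aA oA aB oB x (p + 1)).1 u v
        = - (seq aA oA aB oB x (p + 1)).1 v u := by
      intro u v
      rw [hstep]
      exact mutB_skew ihSkew _ u v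
    refine ⟨hskew', ?_, ?_, ?_, ?_⟩
    · -- the new column at the next mutation vertex
      intro hp31 v
      have hp4 : p + 4 ≤ n := by omega
      rw [hstep]
      show mutB B (Sum.inl ((p : ZMod n))) v (Sum.inl (((p + 1 : ℕ)) : ZMod n))
        = colF aA oA aB oB (p + 1) v
      rw [step_col aA oA aB oB hsw hp4 v]
      by_cases hv : v = Sum.inl ((p : ZMod n))
      · subst hv
        rw [if_pos rfl, mutB, if_pos (Or.inl rfl)]
        rw [ihSkew, hB, hcolsucc]
        norm_num
      · rw [if_neg hv, mutB, if_neg (by tauto)]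
        have h1 : B (Sum.inl ((p : ZMod n))) (Sum.inl (((p + 1 : ℕ)) : ZMod n)) = 1 := by
          rw [ihSkew, hB, hcolsucc]
          norm_num
        rw [h1, hB v, ihC (p + 1) (by omega) (by omega) v]
        simp
    · -- future columns are untouched
      intro q hq1 hq2 v
      rw [hstep]
      show mutB B (Sum.inl ((p : ZMod n))) v (Sum.inl ((q : ZMod n)))
        = swB n m l fA fB aA oA aB oB v (Sum.inl ((q : ZMod n)))
      have hqp : (Sum.inl ((q : ZMod n)) : SWV n m l) ≠ Sum.inl ((p : ZMod n)) := by
        simp only [Ne, Sum.inl.injEq]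
        rw [natCast_eq_natCast_iff_of_lt (by omega) (by omega)]
        omega
      have hcolq : colF aA oA aB oB p (Sum.inl ((q : ZMod n))) = 0 := by
        rw [colF_inl_eval aA oA aB oB (by omega) (by omega)]
        rw [if_neg (by omega), if_neg (by omega), if_neg (by omega)]
      have hBq : B (Sum.inl ((p : ZMod n))) (Sum.inl ((q : ZMod n))) = 0 := by
        rw [ihSkew, hB, hcolq]
        norm_num
      by_cases hv : v = Sum.inl ((p : ZMod n))
      · subst hv
        rw [mutB, if_pos (Or.inl rfl), hBq]
        rw [swB_inl_inl_eval aA oA aB oB (by omega) (by omega)]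
        rw [if_neg (by omega), if_neg (by omega)]
        norm_num
      · rw [mutB, if_neg (by tauto), hBq, ihC q (by omega) hq2 v]
        simp
    · -- old variables are untouched
      intro v hv
      rw [hstep]
      show mutX B (Sum.inl ((p : ZMod n))) y v = x v
      rw [mutX, if_neg (hv p (by omega))]
      exact ihD v fun q hq => hv q (by omega)
    · -- the newly created variable
      intro _
      rw [hstep]
      simp only [Nat.add_sub_cancel]
      show mutX B (Sum.inl ((p : ZMod n))) y (Sum.inl ((p : ZMod n)))
        = Fx aA oA aB oB x (p + 1)
      rw [mutX, if_pos rfl]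
      have hBrow : ∀ j, B (Sum.inl ((p : ZMod n))) j = -(colF aA oA aB oB p j) := by
        intro j
        rw [ihSkew, hB]
      have hprod1 : (∏ j, y j ^ (B (Sum.inl ((p : ZMod n))) j).toNat)
          = (∏ j, y j ^ (-(colF aA oA aB oB p j)).toNat) := by
        apply Finset.prod_congr rfl
        intro j _
        rw [hBrow]
      have hprod2 : (∏ j, y j ^ (B j (Sum.inl ((p : ZMod n)))).toNat)
          = (∏ j, y j ^ (colF aA oA aB oB p j).toNat) := by
        apply Finset.prod_congr rfl
        intro j _
        rw [hB]
      rw [hprod1, hprod2, prod_negcolV aA oA aB oB hsw (by omega) y, prod_colV aA oA aB oB y p]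
      -- replace `y` by `x` everywhere
      have hyr : ∀ w : ZMod m ⊕ ZMod l, y (Sum.inr w) = x (Sum.inr w) := fun w =>
        ihD _ (fun q hq => by simp)
      have hy1 : y (Sum.inl (((n - 1 : ℕ)) : ZMod n)) = x (Sum.inl (((n - 1 : ℕ)) : ZMod n)) := by
        apply ihD
        intro q hq
        simp only [Ne, Sum.inl.injEq]
        rw [natCast_eq_natCast_iff_of_lt (by omega) (by omega)]
        omega
      have hy2 : y (Sum.inl (((p + 1 : ℕ)) : ZMod n)) = x (Sum.inl (((p + 1 : ℕ)) : ZMod n)) := by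
        apply ihD
        intro q hq
        simp only [Ne, Sum.inl.injEq]
        rw [natCast_eq_natCast_iff_of_lt (by omega) (by omega)]
        omega
      have hyk : y (Sum.inl ((p : ZMod n))) = x (Sum.inl ((p : ZMod n))) := by
        apply ihD
        intro q hq
        simp only [Ne, Sum.inl.injEq]
        rw [natCast_eq_natCast_iff_of_lt (by omega) (by omega)]
        omega
      have hif : (if 1 ≤ p then y (Sum.inl (((p - 1 : ℕ)) : ZMod n)) else 1)
          = Fx aA oA aB oB x p := by
        by_cases h1 : 1 ≤ p
        · rw [if_pos h1]
          exact ihE h1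
        · have hp0 : p = 0 := by omega
          subst hp0
          rw [if_neg h1, Fx_zero]
      have hxm1 : x (Sum.inl ((p : ZMod n))) = xm n m l x (p + 1) := by
        rw [xm, midV_cast (by omega)]
        simp
      have hxm2 : x (Sum.inl (((p + 1 : ℕ)) : ZMod n)) = xm n m l x (p + 1 + 1) := by
        rw [xm, midV_cast (by omega)]
        simp
      have hxm0 : x (Sum.inl (((n - 1 : ℕ)) : ZMod n)) = xm n m l x 0 := by
        rw [xm_zero_eq]
      rw [hif, hy1, hy2, hyk, hxm1, hxm2, hxm0]
      rw [xjm_congr aA oA hyr, xjp_congr aB oB hyr, xkA_congr aA oA hyr, xkB_congr aB oB hyr]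
      rw [div_eq_iff (ne_of_gt (by rw [← hxm1]; exact hx _))]
      rw [Fx_rec aA oA aB oB x hx p]
      ring

end Main
end SWProof

/-- for a spider web quiver with initial `x`-variables `x` and `x_0 := x_n`,
the mutation sequence `μ_{n−2} ⋯ μ₂ μ₁` applied to the initial seed gives, for each
`1 ≤ i ≤ n−2`,
`μ_{n−2}⋯μ₁(x_i) =
  [Σ_{j=0}^{i} x_{[j]⁻} x_{[j]⁺} (∏_{k=0}^{j−1} x_k)(∏_{k=j+1}^{i} x_{k+1} x_{k,A} x_{k,B})]
    / ∏_{k=1}^{i} x_k`. -/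
theorem mutation_halfway_x_formula (n m l fA fB : ℕ)
    [NeZero n] [NeZero m] [NeZero l] [NeZero fA] [NeZero fB]
    (aA : Fin fA → ZMod n) (oA : Fin fA → ZMod m)
    (aB : Fin fB → ZMod n) (oB : Fin fB → ZMod l)
    (hsw : IsSpiderWeb n m l fA fB aA oA aB oB)
    (x : SWV n m l → ℝ) (hx : ∀ v, 0 < x v)
    (i : ℕ) (hi1 : 1 ≤ i) (hi2 : i ≤ n - 2) :
    (((List.range (n - 2)).map fun s => (Sum.inl ((s : ZMod n)) : SWV n m l)).foldl stepX
          (swB n m l fA fB aA oA aB oB, x)).2 (midV n m l i) =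
      (∑ j ∈ Finset.range (i + 1),
          xjm n m l fA aA oA x j * xjp n m l fB aB oB x j *
            (∏ k ∈ Finset.range j, xm n m l x k) *
            ∏ k ∈ Finset.Icc (j + 1) i,
              (xm n m l x (k + 1) * xkA n m l fA aA oA x k * xkB n m l fB aB oB x k)) /
        ∏ k ∈ Finset.Icc 1 i, xm n m l x k := by
  have hn := hsw.hn
  have hpers : ∀ r, i ≤ r → r ≤ n - 2 →
      (SWProof.seq aA oA aB oB x r).2 (Sum.inl (((i - 1 : ℕ)) : ZMod n))
        = SWProof.Fx aA oA aB oB x i := by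
    intro r
    induction r with
    | zero =>
      intro h1 _
      exact absurd hi1 (by omega)
    | succ r ihr =>
      intro h1 h2
      rcases eq_or_lt_of_le h1 with heq | hlt
      · subst heq
        exact (SWProof.invariant aA oA aB oB hsw x hx (r + 1) h2).2.2.2.2 (by omega)
      · rw [SWProof.seq_succ aA oA aB oB x r]
        show mutX (SWProof.seq aA oA aB oB x r).1 (Sum.inl ((r : ZMod n)))
          (SWProof.seq aA oA aB oB x r).2 (Sum.inl (((i - 1 : ℕ)) : ZMod n))
          = SWProof.Fx aA oA aB oB x i
        rw [mutX, if_neg ?_]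
        · exact ihr (by omega) (by omega)
        · simp only [Ne, Sum.inl.injEq]
          rw [SWProof.natCast_eq_natCast_iff_of_lt (by omega) (by omega)]
          omega
  show (SWProof.seq aA oA aB oB x (n - 2)).2 (midV n m l i) = _
  rw [SWProof.midV_cast hi1, hpers (n - 2) hi2 le_rfl]
  rfl
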